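/- Let A be an additive category and let B be a class of objects of A which contains the zero objects and is closed under isomorphisms and finite biproducts. Let X be a bounded cochain complex over A (i.e. X^n = 0 for all but finitely many n). Then every term X^n is a retract of an object of B if and only if X is a retract, in the category of cochain complexes over A, of a bounded cochain complex all of whose terms lie in B. -/

import Mathlib

open CategoryTheory CategoryTheory.Limits

/-- Let `B` be a class of objects of an additive category `A` containing the
zero objects and closed under isomorphisms and (finite) biproducts.  A bounded
cochain complex `X` over `A` has all its terms retracts of objects of `B` if
and only if `X` is a retract, in the category of cochain complexes, of a
bounded complex all of whose terms lie in `B`. -/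
theorem stmt6 {A : Type*} [Category A] [Preadditive A] [HasZeroObject A]
    [HasBinaryBiproducts A] (B : Set A)
    (hzero : ∀ a : A, Limits.IsZero a → a ∈ B)
    (hiso : ∀ a b : A, (a ≅ b) → a ∈ B → b ∈ B)
    (hbiprod : ∀ a b : A, a ∈ B → b ∈ B → (a ⊞ b) ∈ B)
    (X : CochainComplex A ℤ) (hX : {n : ℤ | ¬ Limits.IsZero (X.X n)}.Finite) :
    (∀ n : ℤ, ∃ b ∈ B, ∃ (i : X.X n ⟶ b) (r : b ⟶ X.X n), i ≫ r = 𝟙 (X.X n)) ↔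
    (∃ Z : CochainComplex A ℤ, {n : ℤ | ¬ Limits.IsZero (Z.X n)}.Finite ∧
      (∀ n : ℤ, Z.X n ∈ B) ∧ ∃ (i : X ⟶ Z) (r : Z ⟶ X), i ≫ r = 𝟙 X) := by
  constructor
  · intro h
    have h' : ∀ n : ℤ, ∃ b ∈ B, ∃ (i : X.X n ⟶ b) (r : b ⟶ X.X n),
        i ≫ r = 𝟙 (X.X n) ∧ (IsZero (X.X n) → IsZero b) := by
      intro n
      by_cases hz : IsZero (X.X n)
      · exact ⟨X.X n, hzero _ hz, 𝟙 _, 𝟙 _, by simp, fun _ => hz⟩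
      · obtain ⟨b, hb, i, r, hir⟩ := h n
        exact ⟨b, hb, i, r, hir, fun hz' => absurd hz' hz⟩
    choose b hbB i r hir hz using h'
    have hsq : ∀ n : ℤ, (r n ≫ X.d n (n+1) ≫ i (n+1)) ≫
        (r (n+1) ≫ X.d (n+1) (n+1+1) ≫ i (n+1+1)) = 0 := by
      intro n
      slice_lhs 3 4 => rw [hir (n+1)]
      simp only [Category.id_comp, Category.comp_id]
      slice_lhs 2 3 => rw [X.d_comp_d]
      simp
    refine ⟨CochainComplex.of b (fun n => r n ≫ X.d n (n+1) ≫ i (n+1)) hsq, ?_, hbB, ?_⟩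
    · refine hX.subset (fun n hn => ?_)
      simp only [Set.mem_setOf_eq] at hn ⊢
      exact fun hzX => hn (hz n hzX)
    · refine ⟨⟨fun n => i n, ?_⟩, ⟨fun n => r n, ?_⟩, ?_⟩
      · intro p q hpq
        obtain rfl : p + 1 = q := hpq
        rw [show (CochainComplex.of b (fun n => r n ≫ X.d n (n+1) ≫ i (n+1)) hsq).d p (p+1) = r p ≫ X.d p (p+1) ≫ i (p+1) from CochainComplex.of_d b (fun n => r n ≫ X.d n (n+1) ≫ i (n+1)) p]
        slice_lhs 1 2 => rw [hir p]
        simp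
      · intro p q hpq
        obtain rfl : p + 1 = q := hpq
        rw [show (CochainComplex.of b (fun n => r n ≫ X.d n (n+1) ≫ i (n+1)) hsq).d p (p+1) = r p ≫ X.d p (p+1) ≫ i (p+1) from CochainComplex.of_d b (fun n => r n ≫ X.d n (n+1) ≫ i (n+1)) p]
        dsimp only
        slice_rhs 3 4 => rw [hir (p+1)]
        simp
      · ext n
        simp [hir n]
  · rintro ⟨Z, _, hZB, I, R, hIR⟩ n
    refine ⟨Z.X n, hZB n, I.f n, R.f n, ?_⟩
    rw [← HomologicalComplex.comp_f, hIR, HomologicalComplex.id_f]
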